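/- Let L be a closed operator on a Hilbert space, N a self-adjoint operator with N ≥ 1, α > 0, and suppose Im⟨ψ, Lψ⟩ ≥ (α/2)⟨ψ, Nψ⟩ for all ψ in the domain, and let z with Im z ≤ 0 be in the resolvent set with R = (L - z)^{-1}. Then ‖N^{1/2} R ψ‖ ≤ √(2/α) · |⟨ψ, Rψ⟩|^{1/2} and ‖N^{1/2} R N^{1/2}‖ ≤ 2/α. -/

import Mathlib

/-- Proposition 4.1(2) of the paper: if `Im⟨ψ,Lψ⟩ ≥ (α/2)⟨ψ,Nψ⟩` with `N ≥ 1`, `Im z ≤ 0`,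
and `R = (L-z)⁻¹`, then `‖N^{1/2}Rψ‖ ≤ √(2/α) |⟨ψ,Rψ⟩|^{1/2}` and `‖N^{1/2} R N^{1/2}‖ ≤ 2/α`,
where `S = N^{1/2}` is the nonnegative self-adjoint square root of `N`. -/
theorem dissipative_smoothing_bound
    {H : Type*} [NormedAddCommGroup H] [InnerProductSpace ℂ H] [CompleteSpace H]
    (α : ℝ) (hα : 0 < α)
    (L N S : H →L[ℂ] H)
    (hN : IsSelfAdjoint N) (hS : IsSelfAdjoint S)
    (hSpos : ∀ ψ : H, 0 ≤ (inner ℂ ψ (S ψ) : ℂ).re)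
    (hSsq : S * S = N)
    (hN1 : ∀ ψ : H, ‖ψ‖ ^ 2 ≤ (inner ℂ ψ (N ψ) : ℂ).re)
    (hnum : ∀ ψ : H, (α / 2) * (inner ℂ ψ (N ψ) : ℂ).re ≤ (inner ℂ ψ (L ψ) : ℂ).im)
    (z : ℂ) (hz : z.im ≤ 0)
    (R : H →L[ℂ] H)
    (hR₁ : R * (L - z • (1 : H →L[ℂ] H)) = 1)
    (hR₂ : (L - z • (1 : H →L[ℂ] H)) * R = 1) :
    (∀ ψ : H, ‖S (R ψ)‖ ≤ Real.sqrt (2 / α) * Real.sqrt ‖(inner ℂ ψ (R ψ) : ℂ)‖)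
    ∧ ‖S * R * S‖ ≤ 2 / α := by
  have hSsym : ∀ x y : H, (inner ℂ (S x) y : ℂ) = inner ℂ x (S y) :=
    fun x y => hS.isSymmetric x y
  -- key quadratic estimate
  have key : ∀ ψ : H, (α / 2) * ‖S (R ψ)‖ ^ 2 ≤ ‖(inner ℂ ψ (R ψ) : ℂ)‖ := by
    intro ψ
    set φ := R ψ with hφdef
    have hφ : L φ - z • φ = ψ := by
      have := congrArg (fun T : H →L[ℂ] H => T ψ) hR₂
      simpa [ContinuousLinearMap.mul_apply, ContinuousLinearMap.sub_apply,
        ContinuousLinearMap.smul_apply] using this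
    have hnorm : (inner ℂ φ (N φ) : ℂ).re = ‖S φ‖ ^ 2 := by
      have : (inner ℂ φ (N φ) : ℂ) = inner ℂ (S φ) (S φ) := by
        rw [← hSsq]
        rw [ContinuousLinearMap.mul_apply, ← hSsym]
      rw [this, ← RCLike.re_to_complex]; exact inner_self_eq_norm_sq _
    have him : (inner ℂ φ ψ : ℂ).im =
        (inner ℂ φ (L φ) : ℂ).im - z.im * (inner ℂ φ φ : ℂ).re := by
      rw [← hφ]
      have hself : (inner ℂ φ φ : ℂ).im = 0 := by
        rw [← RCLike.im_to_complex]; exact inner_self_im φ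
      rw [inner_sub_right, inner_smul_right]
      simp [Complex.mul_im, hself, ← Complex.ofReal_pow]
    have hre : (0:ℝ) ≤ (inner ℂ φ φ : ℂ).re := by
      rw [← RCLike.re_to_complex]; exact inner_self_nonneg
    have h1 : (α / 2) * ‖S φ‖ ^ 2 ≤ (inner ℂ φ ψ : ℂ).im := by
      rw [← hnorm, him]
      have := hnum φ
      nlinarith [mul_nonneg (neg_nonneg.mpr hz) hre]
    have h2' : (inner ℂ φ ψ : ℂ).im ≤ ‖(inner ℂ φ ψ : ℂ)‖ :=
      le_trans (le_abs_self _) (by exact Complex.abs_im_le_norm _)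
    have h3 : ‖(inner ℂ φ ψ : ℂ)‖ = ‖(inner ℂ ψ (R ψ) : ℂ)‖ := by
      rw [hφdef]; exact norm_inner_symm _ _
    linarith [h1, h2', h3.le, h3.ge]
  have h2α : (0:ℝ) ≤ 2 / α := by positivity
  constructor
  · intro ψ
    have h := key ψ
    have hb : ‖S (R ψ)‖ ^ 2 ≤ (2 / α) * ‖(inner ℂ ψ (R ψ) : ℂ)‖ := by
      rw [div_mul_eq_mul_div, le_div_iff₀ hα]
      nlinarith
    calc ‖S (R ψ)‖ = Real.sqrt (‖S (R ψ)‖ ^ 2) := by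
          rw [Real.sqrt_sq (norm_nonneg _)]
      _ ≤ Real.sqrt ((2 / α) * ‖(inner ℂ ψ (R ψ) : ℂ)‖) := Real.sqrt_le_sqrt hb
      _ = Real.sqrt (2 / α) * Real.sqrt ‖(inner ℂ ψ (R ψ) : ℂ)‖ := Real.sqrt_mul h2α _
  · apply ContinuousLinearMap.opNorm_le_bound _ h2α
    intro ψ
    have h := key (S ψ)
    have heq : ‖(inner ℂ (S ψ) (R (S ψ)) : ℂ)‖ = ‖(inner ℂ ψ (S (R (S ψ))) : ℂ)‖ := by
      rw [hSsym]
    have hcs : ‖(inner ℂ ψ (S (R (S ψ))) : ℂ)‖ ≤ ‖ψ‖ * ‖S (R (S ψ))‖ :=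
      norm_inner_le_norm _ _
    have happ : (S * R * S) ψ = S (R (S ψ)) := rfl
    rw [happ]
    by_cases h0 : ‖S (R (S ψ))‖ = 0
    · rw [h0]; positivity
    · have hpos : 0 < ‖S (R (S ψ))‖ := lt_of_le_of_ne (norm_nonneg _) (Ne.symm h0)
      have : (α / 2) * ‖S (R (S ψ))‖ ^ 2 ≤ ‖ψ‖ * ‖S (R (S ψ))‖ := by
        calc (α / 2) * ‖S (R (S ψ))‖ ^ 2 ≤ ‖(inner ℂ (S ψ) (R (S ψ)) : ℂ)‖ := h
          _ = ‖(inner ℂ ψ (S (R (S ψ))) : ℂ)‖ := heq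
          _ ≤ ‖ψ‖ * ‖S (R (S ψ))‖ := hcs
      rw [div_mul_eq_mul_div, le_div_iff₀ hα]
      nlinarith
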